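/- Let (𝒳, ρ, ν) be a metric measure space where ρ is a doubling metric and ν is a finite Borel measure. Then the set 𝓕₀ of functions with ν-negligible boundary is dense in L¹(𝒳, ν): for every g ∈ L¹(𝒳, ν; ℝ) and every δ > 0 there exists g' ∈ L¹(𝒳, ν; ℝ) with ν(∂_{g'}𝒳) = 0 and ‖g − g'‖_{L¹(𝒳,ν)} < δ. -/
import Mathlib


open MeasureTheory Filter Set Metric
open scoped ENNReal NNReal

noncomputable section

/-- The margin of a point: distance to the nearest differently-labeled point (`⊤` if none). -/
def margin {α 𝒴 : Type*} [PseudoMetricSpace α] (η : α → 𝒴) (x : α) : ℝ≥0∞ :=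
  ⨅ (x' : α) (_ : η x' ≠ η x), edist x x'

/-- The boundary of a labeling function: the set of points with zero margin. -/
def labelBoundary {α 𝒴 : Type*} [PseudoMetricSpace α] (η : α → 𝒴) : Set α :=
  {x | margin η x = 0}

/-- A set is mutually-labeling for `η` if its diameter is smaller than the margin of
each of its points. -/
def MutuallyLabeling {α 𝒴 : Type*} [PseudoMetricSpace α] (η : α → 𝒴) (U : Set α) : Prop :=
  ∀ x ∈ U, EMetric.diam U < margin η x

/-- `Xt` is a nearest-neighbor process for the sequence `X` (indices start at 1):
for every `n ≥ 2`, `Xt n` is one of `X 1, …, X (n-1)` realizing the minimal distance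
to `X n`. -/
def IsNNProcess {α : Type*} [PseudoMetricSpace α] (X Xt : ℕ → α) : Prop :=
  ∀ n, 2 ≤ n → (∃ m, 1 ≤ m ∧ m < n ∧ Xt n = X m) ∧
    ∀ m, 1 ≤ m → m < n → dist (X n) (Xt n) ≤ dist (X n) (X m)

/-- The natural filtration of the process `X`: at time `n` it is `σ(X 1, …, X n)`. -/
def natFilt {Ω α : Type*} [MeasurableSpace α] (X : ℕ → Ω → α) (n : ℕ) : MeasurableSpace Ω :=
  ⨆ m ∈ Set.Icc 1 n, MeasurableSpace.comap (X m) inferInstance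

/-- `X` is uniformly dominated by `ν` at rate `ε` (uniform absolute continuity):
for every `δ > 0` and every measurable `A` with `ν A < δ`, almost surely
`P(X n ∈ A | 𝓕 (n-1)) < ε δ` for every `n ≥ 1`. -/
def UniformlyDominatedAtRate {Ω α : Type*} [MeasurableSpace Ω] [MeasurableSpace α]
    (P : Measure Ω) (X : ℕ → Ω → α) (ν : Measure α) (ε : ℝ → ℝ) : Prop :=
  ∀ δ : ℝ, 0 < δ → ∀ A : Set α, MeasurableSet A → ν A < ENNReal.ofReal δ →
    ∀ᵐ ω ∂P, ∀ n, 1 ≤ n →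
      (P[fun ω' => A.indicator (fun _ => (1 : ℝ)) (X n ω') | natFilt X (n - 1)]) ω < ε δ

/-- `X` is uniformly dominated by `ν`. -/
def UniformlyDominated {Ω α : Type*} [MeasurableSpace Ω] [MeasurableSpace α]
    (P : Measure Ω) (X : ℕ → Ω → α) (ν : Measure α) : Prop :=
  ∀ ε : ℝ, 0 < ε → ∃ δ : ℝ, 0 < δ ∧ ∀ A : Set α, MeasurableSet A → ν A < ENNReal.ofReal δ →
    ∀ᵐ ω ∂P, ∀ n, 1 ≤ n →
      (P[fun ω' => A.indicator (fun _ => (1 : ℝ)) (X n ω') | natFilt X (n - 1)]) ω < ε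

/-- `X` is ergodically dominated by `ν` (ergodic continuity). -/
def ErgodicallyDominated {Ω α : Type*} [MeasurableSpace Ω] [MeasurableSpace α]
    (P : Measure Ω) (X : ℕ → Ω → α) (ν : Measure α) : Prop :=
  ∀ ε : ℝ, 0 < ε → ∃ δ : ℝ, 0 < δ ∧ ∀ A : Set α, MeasurableSet A → ν A < ENNReal.ofReal δ →
    ∀ᵐ ω ∂P, Filter.limsup (fun N : ℕ =>
      (∑ n ∈ Finset.Icc 1 N, A.indicator (fun _ => (1 : ℝ)) (X n ω)) / N) atTop < ε

/-- `X` is a `σ`-smoothed process with respect to `ν`. -/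
def Smoothed {Ω α : Type*} [MeasurableSpace Ω] [MeasurableSpace α]
    (P : Measure Ω) (X : ℕ → Ω → α) (ν : Measure α) (σ : ℝ) : Prop :=
  ∀ A : Set α, MeasurableSet A →
    ∀ᵐ ω ∂P, ∀ n, 1 ≤ n →
      (P[fun ω' => A.indicator (fun _ => (1 : ℝ)) (X n ω') | natFilt X (n - 1)]) ω ≤
        σ⁻¹ * (ν A).toReal

/-- `α` is a `d`-doubling metric space: every ball can be covered by `2 ^ d` balls of
half the radius. -/
def DoublingWith (α : Type*) [PseudoMetricSpace α] (d : ℕ) : Prop :=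
  ∀ (x : α) (r : ℝ), ∃ t : Finset α, t.card ≤ 2 ^ d ∧ ball x r ⊆ ⋃ y ∈ t, ball y (r / 2)

/-- `(α, ν)` is upper doubling with parameters `(c, d)`. -/
def UpperDoubling (α : Type*) [PseudoMetricSpace α] [MeasurableSpace α]
    (ν : Measure α) (c : ℝ) (d : ℕ) : Prop :=
  DoublingWith α d ∧ ∀ (x : α) (r : ℝ), 0 < r → ν (ball x r) ≤ ENNReal.ofReal (c * r ^ d)

/-- The `r`-packing number of a set `U`. -/
def packingNumber {α : Type*} [PseudoMetricSpace α] (r : ℝ) (U : Set α) : ℕ∞ :=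
  ⨆ (Z : Finset α) (_ : ↑Z ⊆ U ∧ ∀ z ∈ Z, ∀ z' ∈ Z, z ≠ z' → r ≤ dist z z'), (Z.card : ℕ∞)

/-- The `r`-covering number of a set `A`. -/
def coveringNumber {α : Type*} [PseudoMetricSpace α] (r : ℝ) (A : Set α) : ℕ∞ :=
  ⨅ (t : Finset α) (_ : A ⊆ ⋃ y ∈ t, ball y r), (t.card : ℕ∞)

/-- The upper box-counting dimension of a set. -/
def boxDim {α : Type*} [PseudoMetricSpace α] (A : Set α) : ℝ :=
  Filter.limsup (fun r : ℝ => Real.log ((coveringNumber r A).toNat : ℝ) / Real.log (1 / r))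
    (nhdsWithin 0 (Set.Ioi 0))

/-- The mutually-labeling covering number of `V` for `η`. -/
def mlCoveringNumber {α 𝒴 : Type*} [PseudoMetricSpace α] (η : α → 𝒴) (V : Set α) : ℕ∞ :=
  ⨅ (𝒰 : Finset (Set α)) (_ : (∀ U ∈ 𝒰, MutuallyLabeling η U) ∧ V ⊆ ⋃ U ∈ 𝒰, U),
    (𝒰.card : ℕ∞)

/-- The `r`-expansion of a set. -/
def expansion {α : Type*} [PseudoMetricSpace α] (A : Set α) (r : ℝ) : Set α :=
  ⋃ x ∈ A, ball x r

/-- The upper Minkowski content of `A` with respect to `ν`. -/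
def minkowskiContent {α : Type*} [PseudoMetricSpace α] [MeasurableSpace α]
    (ν : Measure α) (A : Set α) : ℝ≥0∞ :=
  Filter.limsup (fun r : ℝ => (ν (expansion A r) - ν A) / ENNReal.ofReal r)
    (nhdsWithin 0 (Set.Ioi 0))

/-- A length space: the distance between two points is the infimum of lengths of
continuous paths joining them. -/
def IsLengthSpace (α : Type*) [PseudoMetricSpace α] : Prop :=
  ∀ x y : α, edist x y =
    ⨅ (γ : ℝ → α) (_ : ContinuousOn γ (Set.Icc 0 1)) (_ : γ 0 = x) (_ : γ 1 = y),
      eVariationOn γ (Set.Icc 0 1)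

/-- The ball associated to a (center, dyadic level) pair: radius `2 ^ (-level)`. -/
def ballOf {α : Type*} [PseudoMetricSpace α] (p : α × ℕ) : Set α :=
  ball p.1 ((2 : ℝ) ^ (-(p.2 : ℤ)))

/-- The insertion rank of a new point `x` relative to an existing cover tree `C`:
the least `ℓ ≥ 1` such that no ball of radius `2 ^ (-ℓ)` in `C` contains `x`. -/
def nextRank {α : Type*} [PseudoMetricSpace α] (C : Set (α × ℕ)) (x : α) : ℕ :=
  sInf {ℓ : ℕ | 1 ≤ ℓ ∧ ∀ q ∈ C, q.2 = ℓ → x ∉ ballOf q}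

/-- Sequentially constructed cover trees for the points `a 1, a 2, …`; a cover tree is
recorded as the set of its (center, dyadic level) pairs. -/
def coverTree {α : Type*} [PseudoMetricSpace α] (a : ℕ → α) : ℕ → Set (α × ℕ)
  | 0 => ∅
  | 1 => {p | p.1 = a 1}
  | (k + 2) => coverTree a (k + 1) ∪
      {p | p.1 = a (k + 2) ∧ nextRank (coverTree a (k + 1)) (a (k + 2)) ≤ p.2}

/-- The insertion ranks of the sequentially constructed cover trees. -/
def insertionRank {α : Type*} [PseudoMetricSpace α] (a : ℕ → α) : ℕ → ℕ
  | 0 => 0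
  | 1 => 0
  | (k + 2) => nextRank (coverTree a (k + 1)) (a (k + 2))

/-- `𝓕₀` is dense in `L¹`: on a doubling metric space with a finite
Borel measure, every integrable real function can be approximated in `L¹` norm,
arbitrarily well, by an integrable function with `ν`-negligible boundary. -/
theorem negligible_boundary_dense_in_L1
    {α : Type*} [MetricSpace α] [MeasurableSpace α] [BorelSpace α]
    (d : ℕ) (hd : DoublingWith α d) (ν : Measure α) [IsFiniteMeasure ν]
    (g : α → ℝ) (hg : Integrable g ν) (δ : ℝ) (hδ : 0 < δ) :
    ∃ g' : α → ℝ, Integrable g' ν ∧ ν (labelBoundary g') = 0 ∧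
      ∫ x, |g x - g' x| ∂ν < δ := by
  -- Step 1: approximate `g` by a bounded continuous function `f`.
  have hδ4 : (0 : ℝ) < δ / 4 := by linarith
  obtain ⟨f, hf_le, hf_int⟩ := hg.exists_boundedContinuous_integral_sub_le hδ4
  set M : ℝ := (ν Set.univ).toReal with hM
  have hM0 : 0 ≤ M := ENNReal.toReal_nonneg
  set ε : ℝ := δ / (4 * (M + 1)) with hε_def
  have hε : 0 < ε := by
    apply div_pos hδ
    nlinarith
  have hεM : ε * M ≤ δ / 4 := by
    rw [hε_def, div_mul_eq_mul_div, div_le_div_iff₀ (by nlinarith) (by norm_num)]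
    nlinarith
  -- Step 2: choose a grid offset `c` such that all level sets `f⁻¹{c + k ε}` are null.
  have hfm : Measurable f := f.continuous.measurable
  have hS : Set.Countable {t : ℝ | 0 < ν {a | f a = t}} :=
    Measure.countable_meas_level_set_pos hfm
  have hB : Set.Countable (⋃ k : ℤ, (fun t : ℝ => t + (k : ℝ) * ε) ⁻¹'
      {t : ℝ | 0 < ν {a | f a = t}}) := by
    apply Set.countable_iUnion
    intro k
    exact (hS.preimage (add_left_injective ((k : ℝ) * ε)))
  obtain ⟨c, hc⟩ : ∃ c : ℝ, c ∉ (⋃ k : ℤ, (fun t : ℝ => t + (k : ℝ) * ε) ⁻¹'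
      {t : ℝ | 0 < ν {a | f a = t}}) := by
    by_contra h
    push_neg at h
    have : (⋃ k : ℤ, (fun t : ℝ => t + (k : ℝ) * ε) ⁻¹'
        {t : ℝ | 0 < ν {a | f a = t}}) = Set.univ := Set.eq_univ_of_forall h
    exact Set.not_countable_univ (this ▸ hB)
  have hc' : ∀ k : ℤ, ν {a | f a = c + (k : ℝ) * ε} = 0 := by
    intro k
    have := fun h => hc (Set.mem_iUnion.mpr ⟨k, h⟩)
    simpa [le_zero_iff, not_lt] using this
  -- Step 3: define the quantized function `g'`.
  set g' : α → ℝ := fun x => c + ε * (⌊(f x - c) / ε⌋ : ℝ) with hg'_def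
  have hg'm : Measurable g' := by
    apply measurable_const.add
    exact measurable_const.mul
      (measurable_from_top.comp ((hfm.sub measurable_const).div_const ε).floor)
  -- pointwise bound : |f x - g' x| ≤ ε
  have hfg' : ∀ x, |f x - g' x| ≤ ε := by
    intro x
    have h1 : (⌊(f x - c) / ε⌋ : ℝ) ≤ (f x - c) / ε := Int.floor_le _
    have h2 : (f x - c) / ε < ⌊(f x - c) / ε⌋ + 1 := Int.lt_floor_add_one _
    have h1' : (⌊(f x - c) / ε⌋ : ℝ) * ε ≤ f x - c := (le_div_iff₀ hε).mp h1
    have h2' : f x - c < ((⌊(f x - c) / ε⌋ : ℝ) + 1) * ε := (div_lt_iff₀ hε).mp h2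
    rw [abs_le]
    constructor <;> simp only [hg'_def] <;> nlinarith
  have hg'_int : Integrable g' ν := by
    apply Integrable.mono' (g := fun x => |f x| + ε) (hf_int.abs.add (integrable_const ε))
      hg'm.aestronglyMeasurable
    filter_upwards with x
    have := hfg' x
    rw [Real.norm_eq_abs]
    have h3 := abs_sub_abs_le_abs_sub (g' x) (f x)
    rw [abs_sub_comm] at h3
    linarith
  refine ⟨g', hg'_int, ?_, ?_⟩
  · -- null boundary
    have hsub : labelBoundary g' ⊆ ⋃ k : ℤ, {a | f a = c + (k : ℝ) * ε} := by
      intro x hx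
      by_contra hxmem
      simp only [Set.mem_iUnion, Set.mem_setOf_eq, not_exists] at hxmem
      -- f x strictly between grid points
      set k : ℤ := ⌊(f x - c) / ε⌋ with hk
      have h1 : (k : ℝ) ≤ (f x - c) / ε := Int.floor_le _
      have h2 : (f x - c) / ε < (k : ℝ) + 1 := Int.lt_floor_add_one _
      have h1' : (k : ℝ) < (f x - c) / ε := by
        rcases lt_or_eq_of_le h1 with h | h
        · exact h
        · exfalso
          apply hxmem k
          field_simp at h
          linarith
      -- continuity gives a ball on which the floor is constant
      have hcont : ContinuousAt (fun y => (f y - c) / ε) x :=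
        ((f.continuous.continuousAt).sub continuousAt_const).div_const ε
      have hopen : ∀ᶠ y in nhds x, (f y - c) / ε ∈ Set.Ioo ((k : ℝ)) ((k : ℝ) + 1) :=
        hcont (Ioo_mem_nhds h1' h2)
      obtain ⟨r, hr, hball⟩ := Metric.eventually_nhds_iff_ball.mp hopen
      have hconst : ∀ y ∈ Metric.ball x r, g' y = g' x := by
        intro y hy
        obtain ⟨hy1, hy2⟩ := hball y hy
        have : ⌊(f y - c) / ε⌋ = k := Int.floor_eq_iff.mpr ⟨hy1.le, hy2⟩
        simp only [hg'_def, this, hk]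
      have hmargin : ENNReal.ofReal r ≤ margin g' x := by
        rw [margin]
        refine le_iInf fun x' => le_iInf fun hx' => ?_
        rw [edist_dist]
        apply ENNReal.ofReal_le_ofReal
        by_contra hlt
        push_neg at hlt
        exact hx' (hconst x' (Metric.mem_ball'.mpr hlt))
      rw [labelBoundary, Set.mem_setOf_eq] at hx
      rw [hx] at hmargin
      simp only [nonpos_iff_eq_zero, ENNReal.ofReal_eq_zero] at hmargin
      linarith
    refine measure_mono_null hsub ?_
    refine measure_iUnion_null fun k => hc' k
  · -- the integral estimate
    have hint1 : Integrable (fun x => |g x - f x|) ν := (hg.sub hf_int).abs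
    have hint2 : Integrable (fun x => |f x - g' x|) ν := (hf_int.sub hg'_int).abs
    have habs : ∀ x, |g x - g' x| ≤ |g x - f x| + |f x - g' x| := fun x =>
      (abs_sub_le _ _ _)
    have h1 : ∫ x, |g x - g' x| ∂ν ≤ ∫ x, (|g x - f x| + |f x - g' x|) ∂ν := by
      apply integral_mono ((hg.sub hg'_int).abs) (hint1.add hint2) habs
    rw [integral_add hint1 hint2] at h1
    have h2 : ∫ x, |f x - g' x| ∂ν ≤ ∫ _, ε ∂ν :=
      integral_mono hint2 (integrable_const ε) hfg'
    rw [integral_const, smul_eq_mul] at h2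
    have h3 : ∫ x, |g x - f x| ∂ν ≤ δ / 4 := by
      simpa [Real.norm_eq_abs] using hf_le
    have h4 : M * ε ≤ δ / 4 := by rw [mul_comm]; exact hεM
    calc ∫ x, |g x - g' x| ∂ν ≤ _ := h1
      _ ≤ δ / 4 + δ / 4 := by
          apply add_le_add h3 (h2.trans h4)
      _ < δ := by linarith
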